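/- arXiv:2509.14842 — 3 statements merged into one kernel-verified Lean document; each statement's English description precedes it below -/
import Mathlib

section
/- (Kusmin–Landau inequality) Let f : ℕ → ℝ, N ∈ ℕ, and θ ∈ ℝ satisfy 0 < θ ≤ Δf(1) ≤ Δf(2) ≤ … ≤ Δf(N-1) < 1 − θ, where Δf(n) := f(n+1) − f(n). Then |∑_{n=1}^{N} e(f(n))| ≤ cot(πθ/2). -/
open Finset

/-- `e(x) = e^{2πix}`. -/
noncomputable def e (x : ℝ) : ℂ := Complex.exp (2 * Real.pi * Complex.I * x)

noncomputable def g (x : ℝ) : ℂ := 1/2 + ((Real.cot (Real.pi * x) / 2 : ℝ) : ℂ) * Complex.I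

lemma g_re (x : ℝ) : (g x).re = 1/2 := by
  simp only [g, Complex.add_re, Complex.mul_re, Complex.I_re, Complex.I_im,
    Complex.ofReal_re, Complex.ofReal_im]; norm_num
lemma g_im (x : ℝ) : (g x).im = Real.cot (Real.pi * x) / 2 := by
  simp only [g, Complex.add_im, Complex.mul_im, Complex.I_re, Complex.I_im,
    Complex.ofReal_re, Complex.ofReal_im]; norm_num

lemma e_eq (x : ℝ) : e x = Complex.exp (((2 * Real.pi * x : ℝ) : ℂ) * Complex.I) := by
  unfold e; push_cast; ring_nf
lemma e_re (x : ℝ) : (e x).re = Real.cos (2 * Real.pi * x) := by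
  rw [e_eq]; exact Complex.exp_ofReal_mul_I_re _
lemma e_im (x : ℝ) : (e x).im = Real.sin (2 * Real.pi * x) := by
  rw [e_eq]; exact Complex.exp_ofReal_mul_I_im _
lemma abs_e (x : ℝ) : ‖e x‖ = 1 := by
  rw [e_eq, Complex.norm_exp]; simp
lemma e_add (x y : ℝ) : e (x + y) = e x * e y := by
  unfold e; rw [← Complex.exp_add]; congr 1; push_cast; ring

lemma one_sub_e_mul_g (x : ℝ) (hs : Real.sin (Real.pi * x) ≠ 0) :
    (1 - e x) * g x = 1 := by
  have hcos : Real.cos (2 * Real.pi * x) = 2 * Real.cos (Real.pi * x) ^ 2 - 1 := by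
    have := Real.cos_two_mul (Real.pi * x)
    rwa [show 2 * (Real.pi * x) = 2 * Real.pi * x by ring] at this
  have hsin : Real.sin (2 * Real.pi * x) = 2 * Real.sin (Real.pi * x) * Real.cos (Real.pi * x) := by
    have := Real.sin_two_mul (Real.pi * x)
    rwa [show 2 * (Real.pi * x) = 2 * Real.pi * x by ring] at this
  have hpy := Real.sin_sq_add_cos_sq (Real.pi * x)
  apply Complex.ext
  · simp only [Complex.mul_re, Complex.sub_re, Complex.sub_im, Complex.one_re, Complex.one_im,
      e_re, e_im, g_re, g_im, Real.cot_eq_cos_div_sin, hcos, hsin]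
    field_simp
    ring_nf
  · simp only [Complex.mul_im, Complex.sub_re, Complex.sub_im, Complex.one_re, Complex.one_im,
      e_re, e_im, g_re, g_im, Real.cot_eq_cos_div_sin, hcos, hsin]
    field_simp
    ring_nf
    linear_combination (-2 * Real.cos (Real.pi*x)) * hpy

lemma abs_g (x : ℝ) (hs : 0 < Real.sin (Real.pi * x)) :
    ‖g x‖ = 1 / (2 * Real.sin (Real.pi * x)) := by
  rw [Complex.norm_def, Complex.normSq_apply, g_re, g_im, Real.cot_eq_cos_div_sin]
  rw [show 1/2 * (1/2) + Real.cos (Real.pi*x) / Real.sin (Real.pi*x) / 2 *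
      (Real.cos (Real.pi*x) / Real.sin (Real.pi*x) / 2) = (1 / (2 * Real.sin (Real.pi*x)))^2 by
    field_simp; nlinarith [Real.sin_sq_add_cos_sq (Real.pi * x)]]
  exact Real.sqrt_sq (by positivity)

lemma abs_one_sub_g (x : ℝ) (hs : 0 < Real.sin (Real.pi * x)) :
    ‖1 - g x‖ = 1 / (2 * Real.sin (Real.pi * x)) := by
  have h1 : ((1 : ℂ) - g x).re = 1/2 := by
    simp only [Complex.sub_re, Complex.one_re, g_re]; norm_num
  have h2 : ((1 : ℂ) - g x).im = -(Real.cot (Real.pi * x) / 2) := by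
    simp only [Complex.sub_im, Complex.one_im, g_im]; ring
  rw [Complex.norm_def, Complex.normSq_apply, h1, h2, Real.cot_eq_cos_div_sin]
  rw [show 1/2 * (1/2) + -(Real.cos (Real.pi*x) / Real.sin (Real.pi*x) / 2) *
      -(Real.cos (Real.pi*x) / Real.sin (Real.pi*x) / 2) = (1 / (2 * Real.sin (Real.pi*x)))^2 by
    field_simp; nlinarith [Real.sin_sq_add_cos_sq (Real.pi * x)]]
  exact Real.sqrt_sq (by positivity)

lemma abs_g_sub_g (x y : ℝ) :
    ‖g x - g y‖ = |Real.cot (Real.pi * x) - Real.cot (Real.pi * y)| / 2 := by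
  have h1 : g x - g y = ((Real.cot (Real.pi*x) - Real.cot (Real.pi*y))/2 : ℝ) * Complex.I := by
    simp only [g]; push_cast; ring
  rw [h1, norm_mul, Complex.norm_I, Complex.norm_real, Real.norm_eq_abs, mul_one, abs_div, abs_two]

lemma cot_anti {x y : ℝ} (hx : 0 < x) (hxy : x ≤ y) (hy : y < Real.pi) :
    Real.cot y ≤ Real.cot x := by
  have hsx : 0 < Real.sin x := Real.sin_pos_of_pos_of_lt_pi hx (lt_of_le_of_lt hxy hy)
  have hsy : 0 < Real.sin y := Real.sin_pos_of_pos_of_lt_pi (lt_of_lt_of_le hx hxy) hy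
  have h : 0 ≤ Real.sin (y - x) :=
    Real.sin_nonneg_of_nonneg_of_le_pi (by linarith) (by linarith)
  rw [Real.sin_sub] at h
  rw [Real.cot_eq_cos_div_sin, Real.cot_eq_cos_div_sin, div_le_div_iff₀ hsy hsx]
  nlinarith

lemma half1 {a : ℝ} (ha : 0 < a) (ha' : a < Real.pi) :
    1 / (2 * Real.sin a) + Real.cot a / 2 = Real.cot (a/2) / 2 := by
  have hs2 : 0 < Real.sin (a/2) :=
    Real.sin_pos_of_pos_of_lt_pi (by linarith) (by linarith [Real.pi_pos])
  have hc2 : 0 < Real.cos (a/2) :=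
    Real.cos_pos_of_mem_Ioo ⟨by linarith [Real.pi_pos], by linarith⟩
  have hsin : Real.sin a = 2 * Real.sin (a/2) * Real.cos (a/2) := by
    have := Real.sin_two_mul (a/2); rwa [show 2 * (a/2) = a by ring] at this
  have hcos : Real.cos a = 2 * Real.cos (a/2) ^ 2 - 1 := by
    have := Real.cos_two_mul (a/2); rwa [show 2 * (a/2) = a by ring] at this
  have hpy := Real.sin_sq_add_cos_sq (a/2)
  rw [Real.cot_eq_cos_div_sin, Real.cot_eq_cos_div_sin, hsin, hcos]
  field_simp
  nlinarith [hpy]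

lemma half2 {b : ℝ} (hb : 0 < b) (hb' : b < Real.pi) :
    1 / (2 * Real.sin b) - Real.cot b / 2 = (Real.sin (b/2) / Real.cos (b/2)) / 2 := by
  have hs2 : 0 < Real.sin (b/2) :=
    Real.sin_pos_of_pos_of_lt_pi (by linarith) (by linarith [Real.pi_pos])
  have hc2 : 0 < Real.cos (b/2) :=
    Real.cos_pos_of_mem_Ioo ⟨by linarith [Real.pi_pos], by linarith⟩
  have hsin : Real.sin b = 2 * Real.sin (b/2) * Real.cos (b/2) := by
    have := Real.sin_two_mul (b/2); rwa [show 2 * (b/2) = b by ring] at this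
  have hcos : Real.cos b = 2 * Real.cos (b/2) ^ 2 - 1 := by
    have := Real.cos_two_mul (b/2); rwa [show 2 * (b/2) = b by ring] at this
  have hpy := Real.sin_sq_add_cos_sq (b/2)
  rw [Real.cot_eq_cos_div_sin, hsin, hcos]
  field_simp
  linear_combination (-2) * hpy

lemma key_ineq {θ x y : ℝ} (hθ : 0 < θ) (hx : θ ≤ x) (hxy : x ≤ y) (hy : y < 1 - θ) :
    1 / (2 * Real.sin (Real.pi * x)) + (Real.cot (Real.pi * x) - Real.cot (Real.pi * y)) / 2
      + 1 / (2 * Real.sin (Real.pi * y)) ≤ Real.cot (Real.pi * θ / 2) := by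
  have hpi := Real.pi_pos
  have hθ2 : θ < 1/2 := by linarith
  have ha0 : 0 < Real.pi * x := by nlinarith
  have haπ : Real.pi * x < Real.pi := by nlinarith
  have hb0 : 0 < Real.pi * y := by nlinarith
  have hbπ : Real.pi * y < Real.pi := by nlinarith
  have ht0 : 0 < Real.pi * θ / 2 := by nlinarith
  have e1 := half1 ha0 haπ
  have e2 := half2 hb0 hbπ
  have c1 : Real.cot (Real.pi * x / 2) ≤ Real.cot (Real.pi * θ / 2) :=
    cot_anti ht0 (by nlinarith) (by nlinarith)
  have c2 : Real.sin (Real.pi * y / 2) / Real.cos (Real.pi * y / 2)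
      ≤ Real.cot (Real.pi * θ / 2) := by
    have heq : Real.sin (Real.pi * y / 2) / Real.cos (Real.pi * y / 2)
        = Real.cot (Real.pi / 2 - Real.pi * y / 2) := by
      rw [Real.cot_eq_cos_div_sin, Real.cos_pi_div_two_sub, Real.sin_pi_div_two_sub]
    rw [heq]
    exact cot_anti ht0 (by nlinarith) (by nlinarith)
  calc 1 / (2 * Real.sin (Real.pi * x)) + (Real.cot (Real.pi * x) - Real.cot (Real.pi * y)) / 2
        + 1 / (2 * Real.sin (Real.pi * y))
      = (1 / (2 * Real.sin (Real.pi * x)) + Real.cot (Real.pi * x) / 2)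
        + (1 / (2 * Real.sin (Real.pi * y)) - Real.cot (Real.pi * y) / 2) := by ring
    _ = Real.cot (Real.pi * x / 2) / 2
        + (Real.sin (Real.pi * y / 2) / Real.cos (Real.pi * y / 2)) / 2 := by rw [e1, e2]
    _ ≤ Real.cot (Real.pi * θ / 2) / 2 + Real.cot (Real.pi * θ / 2) / 2 := by gcongr
    _ = Real.cot (Real.pi * θ / 2) := by ring

lemma abel_sum (a b : ℕ → ℂ) : ∀ M, 1 ≤ M →
    ∑ n ∈ Icc 1 M, (a n - a (n+1)) * b n
      = a 1 * b 1 - a (M+1) * b M + ∑ n ∈ Icc 2 M, a n * (b n - b (n-1)) := by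
  intro M
  induction M with
  | zero => omega
  | succ M ih =>
    intro _
    rcases Nat.lt_or_ge M 1 with h | h
    · interval_cases M
      simp
      ring
    · rw [Finset.sum_Icc_succ_top (by omega : 1 ≤ M + 1),
        Finset.sum_Icc_succ_top (by omega : 2 ≤ M + 1), ih h]
      simp only [Nat.add_sub_cancel]
      ring

lemma telescope (c : ℕ → ℝ) (M : ℕ) (hM : 1 ≤ M) :
    ∑ n ∈ Icc 2 M, (c (n-1) - c n) = c 1 - c M := by
  induction M with
  | zero => omega
  | succ M ih =>
    rcases Nat.lt_or_ge M 1 with h | h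
    · interval_cases M
      simp
    · rw [Finset.sum_Icc_succ_top (by omega : 2 ≤ M + 1), ih h]
      simp only [Nat.add_sub_cancel]
      ring

/-- Kusmin–Landau inequality: if
`0 < θ ≤ Δf(1) ≤ Δf(2) ≤ … ≤ Δf(N-1) < 1 − θ`, where `Δf(n) = f(n+1) − f(n)`, then
`|∑_{n=1}^{N} e(f(n))| ≤ cot(πθ/2)`. -/
theorem stmt_1 (f : ℕ → ℝ) (N : ℕ) (hN : 2 ≤ N) (θ : ℝ) (hθ : 0 < θ)
    (hlow : θ ≤ f 2 - f 1)
    (hmono : ∀ n, 1 ≤ n → n + 1 ≤ N - 1 → f (n + 1) - f n ≤ f (n + 2) - f (n + 1))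
    (hhigh : f N - f (N - 1) < 1 - θ) :
    ‖∑ n ∈ Finset.Icc 1 N, e (f n)‖ ≤ Real.cot (Real.pi * θ / 2) := by
  have hpi := Real.pi_pos
  obtain ⟨M, rfl⟩ : ∃ M, N = M + 1 := ⟨N - 1, by omega⟩
  have hM : 1 ≤ M := by omega
  simp only [Nat.add_sub_cancel] at hhigh hmono
  have h12 : f (1 + 1) = f 2 := rfl
  -- monotonicity chain
  have chain : ∀ j i, 1 ≤ i → i ≤ j → j ≤ M → f (i+1) - f i ≤ f (j+1) - f j := by
    intro j
    induction j with
    | zero => intro i h1 h2 h3; omega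
    | succ j ih =>
      intro i h1 h2 h3
      rcases Nat.eq_or_lt_of_le h2 with h | h
      · rw [h]
      · have h2' : i ≤ j := by omega
        have h1j : 1 ≤ j := le_trans h1 h2'
        calc f (i+1) - f i ≤ f (j+1) - f j := ih i h1 h2' (by omega)
          _ ≤ f (j+2) - f (j+1) := hmono j h1j (by omega)
  have hbound : ∀ n, 1 ≤ n → n ≤ M → θ ≤ f (n+1) - f n ∧ f (n+1) - f n < 1 - θ := by
    intro n h1 h2
    constructor
    · have := chain n 1 le_rfl h1 h2
      rw [h12] at this
      linarith
    · have := chain M n h1 h2 le_rfl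
      linarith
  have hsin : ∀ n, 1 ≤ n → n ≤ M → 0 < Real.sin (Real.pi * (f (n+1) - f n)) := by
    intro n h1 h2
    obtain ⟨hb1, hb2⟩ := hbound n h1 h2
    apply Real.sin_pos_of_pos_of_lt_pi
    · nlinarith
    · nlinarith
  have hstep : ∀ n ∈ Icc 1 M, e (f n) = (e (f n) - e (f (n+1))) * g (f (n+1) - f n) := by
    intro n hn
    rw [mem_Icc] at hn
    have hs : Real.sin (Real.pi * (f (n+1) - f n)) ≠ 0 := (hsin n hn.1 hn.2).ne'
    have h1 : e (f (n+1)) = e (f n) * e (f (n+1) - f n) := by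
      rw [← e_add]; congr 1; ring
    have h2 := one_sub_e_mul_g _ hs
    calc e (f n) = e (f n) * ((1 - e (f (n+1) - f n)) * g (f (n+1) - f n)) := by
          rw [h2, mul_one]
      _ = (e (f n) - e (f (n+1))) * g (f (n+1) - f n) := by rw [h1]; ring
  have habel := abel_sum (fun n => e (f n)) (fun n => g (f (n+1) - f n)) M hM
  beta_reduce at habel
  have hcong : ∑ n ∈ Icc 2 M, e (f n) * (g (f (n+1) - f n) - g (f (n-1+1) - f (n-1)))
      = ∑ n ∈ Icc 2 M, e (f n) * (g (f (n+1) - f n) - g (f n - f (n-1))) := by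
    apply Finset.sum_congr rfl
    intro n hn
    rw [mem_Icc] at hn
    have h1 : n - 1 + 1 = n := by omega
    rw [h1]
  have hsum : ∑ n ∈ Icc 1 (M+1), e (f n)
      = e (f 1) * g (f 2 - f 1)
        + (∑ n ∈ Icc 2 M, e (f n) * (g (f (n+1) - f n) - g (f n - f (n-1))))
        + e (f (M+1)) * (1 - g (f (M+1) - f M)) := by
    rw [Finset.sum_Icc_succ_top (by omega : 1 ≤ M + 1)]
    rw [Finset.sum_congr rfl hstep, habel, hcong, h12]
    ring
  rw [hsum]
  have hs1 : 0 < Real.sin (Real.pi * (f 2 - f 1)) := by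
    have := hsin 1 le_rfl hM
    rwa [h12] at this
  have hsM : 0 < Real.sin (Real.pi * (f (M+1) - f M)) := hsin M hM le_rfl
  have tineq : ‖e (f 1) * g (f 2 - f 1)
        + (∑ n ∈ Icc 2 M, e (f n) * (g (f (n+1) - f n) - g (f n - f (n-1))))
        + e (f (M+1)) * (1 - g (f (M+1) - f M))‖
      ≤ 1 / (2 * Real.sin (Real.pi * (f 2 - f 1)))
        + (∑ n ∈ Icc 2 M,
            (Real.cot (Real.pi * (f n - f (n-1))) - Real.cot (Real.pi * (f (n+1) - f n))) / 2)
        + 1 / (2 * Real.sin (Real.pi * (f (M+1) - f M))) := by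
    refine le_trans (norm_add_le _ _) ?_
    refine add_le_add (le_trans (norm_add_le _ _) (add_le_add ?_ ?_)) ?_
    · rw [norm_mul, abs_e, one_mul, abs_g _ hs1]
    · refine le_trans (norm_sum_le _ _) (Finset.sum_le_sum ?_)
      intro n hn
      rw [mem_Icc] at hn
      rw [norm_mul, abs_e, one_mul, abs_g_sub_g]
      have hbn : θ ≤ f n - f (n-1) ∧ f n - f (n-1) < 1 - θ := by
        have := hbound (n-1) (by omega) (by omega)
        have h1 : n - 1 + 1 = n := by omega
        rwa [h1] at this
      obtain ⟨hb1, hb2⟩ := hbn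
      obtain ⟨hb3, hb4⟩ := hbound n (by omega) hn.2
      have hmonon : f n - f (n-1) ≤ f (n+1) - f n := by
        have := hmono (n-1) (by omega) (by omega)
        have h1 : n - 1 + 1 = n := by omega
        have h2 : n - 1 + 2 = n + 1 := by omega
        rwa [h1, h2] at this
      have hcot : Real.cot (Real.pi * (f (n+1) - f n)) ≤ Real.cot (Real.pi * (f n - f (n-1))) := by
        apply cot_anti
        · nlinarith
        · nlinarith
        · nlinarith
      rw [abs_of_nonpos (by linarith)]
      linarith
    · rw [norm_mul, abs_e, one_mul, abs_one_sub_g _ hsM]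
  refine le_trans tineq ?_
  have htel : ∑ n ∈ Icc 2 M,
      (Real.cot (Real.pi * (f n - f (n-1))) - Real.cot (Real.pi * (f (n+1) - f n))) / 2
      = (Real.cot (Real.pi * (f 2 - f 1)) - Real.cot (Real.pi * (f (M+1) - f M))) / 2 := by
    rw [← Finset.sum_div]
    have ht := telescope (fun k => Real.cot (Real.pi * (f (k+1) - f k))) M hM
    beta_reduce at ht
    have hc : ∑ n ∈ Icc 2 M,
        (Real.cot (Real.pi * (f n - f (n-1))) - Real.cot (Real.pi * (f (n+1) - f n)))
        = ∑ n ∈ Icc 2 M,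
        (Real.cot (Real.pi * (f (n-1+1) - f (n-1))) - Real.cot (Real.pi * (f (n+1) - f n))) := by
      apply Finset.sum_congr rfl
      intro n hn
      rw [mem_Icc] at hn
      have h1 : n - 1 + 1 = n := by omega
      rw [h1]
    rw [hc, ht, h12]
  rw [htel]
  have hxy : f 2 - f 1 ≤ f (M+1) - f M := by
    have := chain M 1 le_rfl hM le_rfl
    rwa [h12] at this
  exact key_ineq hθ hlow hxy hhigh
end

section
/- Let φ ∈ [0,1). If {bₙ}_{n≥1} ⊂ ℝ is a monotone bounded sequence and {zₙ}_{n≥1} ∈ 𝕎_φ, then {bₙ·zₙ}_{n≥1} ∈ 𝕎_φ. -/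
/-- `𝕎_φ`: the set of sequences `{yₙ}` such that every solution of
`x_{n+1} = e(−φ)xₙ + yₙ` (n ≥ 1) is bounded. -/
def memW (φ : ℝ) (y : ℕ → ℂ) : Prop :=
  ∀ x : ℕ → ℂ, (∀ n, 1 ≤ n → x (n + 1) = e (-φ) * x n + y n) →
    ∃ C : ℝ, ∀ n, 1 ≤ n → ‖x n‖ ≤ C

/-- if `{bₙ}_{n≥1}` is a monotone bounded real sequence and
`{zₙ} ∈ 𝕎_φ`, then `{bₙ zₙ} ∈ 𝕎_φ`. -/
theorem stmt_10 (φ : ℝ) (hφ0 : 0 ≤ φ) (hφ1 : φ < 1) (b : ℕ → ℝ) (z : ℕ → ℂ)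
    (hmono : (∀ m n, 1 ≤ m → m ≤ n → b m ≤ b n) ∨ (∀ m n, 1 ≤ m → m ≤ n → b n ≤ b m))
    (hbdd : ∃ C : ℝ, ∀ n, 1 ≤ n → |b n| ≤ C)
    (hz : memW φ z) :
    memW φ (fun n => (b n : ℂ) * z n) := by
  intro x hx
  set q : ℂ := e (-φ) with hq_def
  have hq : ‖q‖ = 1 := by
    rw [hq_def]
    simp [e, Complex.norm_exp]
  let S : ℕ → ℂ := fun n => Nat.rec 0 (fun k Sk => q * Sk + z k) n
  have hSrec : ∀ n : ℕ, S (n + 1) = q * S n + z n := fun n => rfl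
  obtain ⟨M₀, hM₀⟩ := hz S (fun n _ => hSrec n)
  obtain ⟨C, hC⟩ := hbdd
  have hM0 : 0 ≤ M₀ := le_trans (norm_nonneg (S 1)) (hM₀ 1 le_rfl)
  have hC0 : 0 ≤ C := le_trans (abs_nonneg (b 1)) (hC 1 le_rfl)
  set y : ℕ → ℂ := fun n => x n - (b n : ℂ) * S n with hy_def
  have hyrec : ∀ n, 1 ≤ n → y (n + 1) = q * y n + ((b n : ℂ) - b (n + 1)) * S (n + 1) := by
    intro n hn
    simp only [hy_def]
    rw [hx n hn, hSrec n]
    ring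
  have hstep : ∀ n, 1 ≤ n →
      ‖y (n + 1)‖ ≤ ‖y n‖ + |b (n + 1) - b n| * M₀ := by
    intro n hn
    rw [hyrec n hn]
    calc ‖q * y n + ((b n : ℂ) - b (n + 1)) * S (n + 1)‖
        ≤ ‖q * y n‖ + ‖((b n : ℂ) - b (n + 1)) * S (n + 1)‖ :=
          norm_add_le _ _
      _ = ‖y n‖ + |b n - b (n + 1)| * ‖S (n + 1)‖ := by
          rw [norm_mul, norm_mul, hq, one_mul,
            show ((b n : ℂ) - b (n + 1)) = ((b n - b (n + 1) : ℝ) : ℂ) by push_cast; ring,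
            Complex.norm_real, Real.norm_eq_abs]
      _ ≤ ‖y n‖ + |b (n + 1) - b n| * M₀ := by
          rw [abs_sub_comm]
          gcongr
          exact hM₀ (n + 1) (by omega)
  have key : ∀ n, 1 ≤ n → ‖y n‖ ≤ ‖y 1‖ + 2 * C * M₀ := by
    rcases hmono with hmono | hmono
    · have claim : ∀ n, 1 ≤ n →
          ‖y n‖ ≤ ‖y 1‖ + (b n - b 1) * M₀ := by
        intro n hn
        induction n, hn using Nat.le_induction with
        | base => simp
        | succ n hn ih =>
          have hb : b n ≤ b (n + 1) := hmono n (n + 1) hn (by omega)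
          have h := hstep n hn
          rw [abs_of_nonneg (by linarith)] at h
          linarith
      intro n hn
      have hbn := abs_le.mp (hC n hn)
      have hb1 := abs_le.mp (hC 1 le_rfl)
      have h := claim n hn
      nlinarith [mul_le_mul_of_nonneg_right (show b n - b 1 ≤ 2 * C by linarith) hM0]
    · have claim : ∀ n, 1 ≤ n →
          ‖y n‖ ≤ ‖y 1‖ + (b 1 - b n) * M₀ := by
        intro n hn
        induction n, hn using Nat.le_induction with
        | base => simp
        | succ n hn ih =>
          have hb : b (n + 1) ≤ b n := hmono n (n + 1) hn (by omega)
          have h := hstep n hn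
          rw [abs_of_nonpos (by linarith), neg_sub] at h
          linarith
      intro n hn
      have hbn := abs_le.mp (hC n hn)
      have hb1 := abs_le.mp (hC 1 le_rfl)
      have h := claim n hn
      nlinarith [mul_le_mul_of_nonneg_right (show b 1 - b n ≤ 2 * C by linarith) hM0]
  refine ⟨‖y 1‖ + 2 * C * M₀ + C * M₀, fun n hn => ?_⟩
  have hx_eq : x n = y n + (b n : ℂ) * S n := by simp [hy_def]
  calc ‖x n‖ ≤ ‖y n‖ + ‖(b n : ℂ) * S n‖ := by
        rw [hx_eq]; exact norm_add_le _ _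
    _ ≤ ‖y 1‖ + 2 * C * M₀ + C * M₀ := by
        have h1 := key n hn
        have h2 : ‖(b n : ℂ) * S n‖ ≤ C * M₀ := by
          rw [norm_mul, Complex.norm_real, Real.norm_eq_abs]
          exact mul_le_mul (hC n hn) (hM₀ n hn) (norm_nonneg _) hC0
        linarith
end

section
/- Let M ≥ 1, λ ∈ ℂ, and let J_λ be the M×M Jordan cell with eigenvalue λ (entries λ on the diagonal, 1 on the superdiagonal, 0 elsewhere). Let {x(n)}_{n≥1} ⊂ ℂ^M be the solution of x(n+1) = J_λ x(n) + y(n) (n ≥ 1) with given initial value x(1) and given sequence {y(n)}_{n≥1} ⊂ ℂ^M. Then for every 1 ≤ m ≤ M and every n ≥ 1, the m-th coordinate satisfies x_m(n) = ∑_{i=0}^{M−m} C(n−1, i) λ^{n−1−i} [ x_{i+m}(1) + ∑_{r=0}^{M−(i+m)} (−1)^r ∑_{k=1}^{n−1} ( (k)^{[r]} / r! ) · λ^{−k−r} · y_{r+i+m}(k) ], provided λ ≠ 0. -/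
open Finset

def Tz (a b s : ℕ) : ℤ :=
  ∑ r ∈ range (s + 1), (-1) ^ r * ((a + r).choose r : ℤ) * (b.choose (s - r) : ℤ)

lemma Tz_zero (a b : ℕ) : Tz a b 0 = 1 := by simp [Tz]

lemma Tz_star (a b s : ℕ) :
    Tz (a + 1) b (s + 1) + Tz (a + 1) b s = Tz a b (s + 1) := by
  unfold Tz
  rw [Finset.sum_range_succ'
        (fun r => ((-1:ℤ)) ^ r * ((a + 1 + r).choose r : ℤ) * (b.choose (s + 1 - r) : ℤ)) (s+1),
      Finset.sum_range_succ'
        (fun r => ((-1:ℤ)) ^ r * ((a + r).choose r : ℤ) * (b.choose (s + 1 - r) : ℤ)) (s+1)]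
  simp only [pow_zero, Nat.choose_zero_right, Nat.cast_one, one_mul, mul_one, Nat.sub_zero,
    Nat.add_zero]
  rw [add_right_comm]
  congr 1
  rw [← Finset.sum_add_distrib]
  refine Finset.sum_congr rfl fun r _ => ?_
  have h1 : a + 1 + (r + 1) = (a + 1 + r) + 1 := by omega
  have h2 : a + (r + 1) = a + 1 + r := by omega
  have h3 : s + 1 - (r + 1) = s - r := by omega
  rw [h1, h2, h3, Nat.choose_succ_succ]
  push_cast
  ring

lemma Tz_starstar (a b s : ℕ) :
    Tz a (b + 1) (s + 1) = Tz a b (s + 1) + Tz a b s := by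
  unfold Tz
  rw [Finset.sum_range_succ
        (fun r => ((-1:ℤ)) ^ r * ((a + r).choose r : ℤ) * ((b+1).choose (s + 1 - r) : ℤ)) (s+1),
      Finset.sum_range_succ
        (fun r => ((-1:ℤ)) ^ r * ((a + r).choose r : ℤ) * (b.choose (s + 1 - r) : ℤ)) (s+1)]
  rw [add_right_comm]
  congr 1
  · rw [← Finset.sum_add_distrib]
    refine Finset.sum_congr rfl fun r hr => ?_
    have hr' := mem_range.mp hr
    have h3 : s + 1 - r = (s - r) + 1 := by omega
    rw [h3, Nat.choose_succ_succ]
    push_cast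
    ring
  · simp

lemma Tz_base_step (s : ℕ) : Tz 0 1 (s+1) + Tz 0 1 s = ((1:ℕ).choose (s+1) : ℤ) := by
  unfold Tz
  rw [Finset.sum_range_succ'
        (fun r => ((-1:ℤ)) ^ r * ((0 + r).choose r : ℤ) * ((1:ℕ).choose (s + 1 - r) : ℤ)) (s+1)]
  have h : ∑ r ∈ range (s+1),
        ((-1:ℤ)) ^ (r+1) * ((0 + (r+1)).choose (r+1) : ℤ) * ((1:ℕ).choose (s + 1 - (r+1)) : ℤ)
      + ∑ r ∈ range (s+1),
        ((-1:ℤ)) ^ r * ((0 + r).choose r : ℤ) * ((1:ℕ).choose (s - r) : ℤ) = 0 := by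
    rw [← Finset.sum_add_distrib]
    refine Finset.sum_eq_zero fun r hr => ?_
    have h3 : s + 1 - (r+1) = s - r := by omega
    rw [h3]
    simp only [Nat.zero_add, Nat.choose_self, Nat.cast_one, pow_succ]
    ring
  simp only [Nat.zero_add, Nat.choose_self, Nat.cast_one, pow_zero, one_mul, mul_one,
    Nat.sub_zero, Nat.add_zero] at h ⊢
  linarith [h]

lemma Tz_base (s : ℕ) : Tz 0 1 s = if s = 0 then 1 else 0 := by
  induction s with
  | zero => simp [Tz]
  | succ s ih =>
    have h := Tz_base_step s
    rw [ih] at h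
    rcases Nat.eq_zero_or_pos s with rfl | hs
    · simpa using h
    · have h1 : (1:ℕ).choose (s+1) = 0 := Nat.choose_eq_zero_of_lt (by omega)
      rw [h1, if_neg (by omega)] at h
      rw [if_neg (by omega)]
      push_cast at h
      linarith

lemma Tz_delta (a : ℕ) : ∀ s, Tz a (a + 1) s = if s = 0 then 1 else 0 := by
  induction a with
  | zero => exact Tz_base
  | succ a ih =>
    intro s
    cases s with
    | zero => simp [Tz_zero]
    | succ s =>
      rw [show a + 1 + 1 = (a+1) + 1 from rfl, Tz_starstar (a+1) (a+1) s,
        Tz_star a (a+1) s, ih (s+1)]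

lemma prod_eq_ascFactorial (k r : ℕ) :
    (∏ j ∈ range r, ((k : ℂ) + (j : ℂ))) = (k.ascFactorial r : ℂ) := by
  induction r with
  | zero => simp
  | succ r ih =>
    rw [Finset.prod_range_succ, ih, Nat.ascFactorial_succ]
    push_cast
    ring

lemma conv_delta (n s : ℕ) (hn : 1 ≤ n) :
    ∑ r ∈ range (s+1), ((n.choose (s - r) : ℂ) *
      ((-1:ℂ)^r * ((∏ j ∈ range r, ((n:ℂ) + (j:ℂ))) / (r.factorial : ℂ))))
    = if s = 0 then 1 else 0 := by
  obtain ⟨a, rfl⟩ : ∃ a, n = a + 1 := ⟨n - 1, by omega⟩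
  have hcast : ∑ r ∈ range (s+1), (((a+1).choose (s - r) : ℂ) *
      ((-1:ℂ)^r * ((∏ j ∈ range r, (((a+1:ℕ):ℂ) + (j:ℂ))) / (r.factorial : ℂ))))
      = ((Tz a (a+1) s : ℤ) : ℂ) := by
    unfold Tz
    rw [Int.cast_sum]
    refine Finset.sum_congr rfl fun r _ => ?_
    rw [prod_eq_ascFactorial, Nat.ascFactorial_eq_factorial_mul_choose]
    have hfac : ((r.factorial : ℂ)) ≠ 0 := by
      exact_mod_cast r.factorial_ne_zero
    push_cast
    field_simp
  rw [hcast, Tz_delta a s]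
  split <;> simp

lemma conv_sum (N : ℕ) (hN : 1 ≤ N) (c d g : ℕ → ℂ)
    (hg : ∀ t, N ≤ t → g t = 0)
    (hconv : ∀ s, ∑ r ∈ range (s+1), c (s - r) * d r = if s = 0 then 1 else 0) :
    ∑ i ∈ range N, ∑ r ∈ range N, c i * d r * g (i + r) = g 0 := by
  have h1 : ∀ i ∈ range N, ∑ r ∈ range N, c i * d r * g (i + r)
      = ∑ r ∈ range (N - i), c i * d r * g (i + r) := by
    intro i hi
    refine (Finset.sum_subset (Finset.range_subset_range.mpr (by omega)) ?_).symm
    intro r hr hr2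
    simp only [mem_range] at hr hr2
    rw [hg (i + r) (by omega), mul_zero]
  rw [Finset.sum_congr rfl h1]
  have h2 : ∑ i ∈ range N, ∑ r ∈ range (N - i), c i * d r * g (i + r)
      = ∑ s ∈ range N, ∑ r ∈ range (s + 1), c (s - r) * d r * g s := by
    rw [Finset.sum_sigma', Finset.sum_sigma']
    refine Finset.sum_nbij' (fun p => ⟨p.1 + p.2, p.2⟩) (fun p => ⟨p.1 - p.2, p.2⟩)
      ?_ ?_ ?_ ?_ ?_
    · intro p hp
      simp only [Finset.mem_sigma, mem_range] at hp ⊢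
      omega
    · intro p hp
      simp only [Finset.mem_sigma, mem_range] at hp ⊢
      omega
    · intro p hp
      simp only [Finset.mem_sigma, mem_range] at hp
      ext <;> simp <;> omega
    · intro p hp
      simp only [Finset.mem_sigma, mem_range] at hp
      ext <;> simp <;> omega
    · intro p hp
      simp only [Finset.mem_sigma, mem_range] at hp
      have : p.1 + p.2 - p.2 = p.1 := by omega
      simp [this]
  rw [h2]
  have h3 : ∀ s ∈ range N, ∑ r ∈ range (s + 1), c (s - r) * d r * g s
      = if s = 0 then g 0 else 0 := by
    intro s _
    rw [← Finset.sum_mul, hconv]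
    split
    · subst ‹s = 0›; simp
    · simp
  rw [Finset.sum_congr rfl h3, Finset.sum_ite_eq' (range N) 0 (fun _ => g 0)]
  rw [if_pos (mem_range.mpr hN)]

noncomputable def Bf (M : ℕ) (lam : ℂ) (X Y : ℕ → ℕ → ℂ) (n s : ℕ) : ℂ :=
  X 1 s + ∑ r ∈ range M, (-1:ℂ)^r *
    ∑ k ∈ Finset.Icc 1 (n-1),
      ((∏ j ∈ range r, ((k:ℂ) + (j:ℂ))) / (r.factorial : ℂ)) *
        lam ^ (-(k:ℤ) - (r:ℤ)) * Y k (s + r)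

noncomputable def Gf (M : ℕ) (lam : ℂ) (X Y : ℕ → ℕ → ℂ) (n m : ℕ) : ℂ :=
  ∑ i ∈ range M, ((n-1).choose i : ℂ) * lam ^ ((n:ℤ) - 1 - (i:ℤ)) * Bf M lam X Y n (m + i)

lemma Bf_of_ge (M : ℕ) (lam : ℂ) (X Y : ℕ → ℕ → ℂ)
    (hX0 : ∀ n s, M ≤ s → X n s = 0) (hY0 : ∀ n s, M ≤ s → Y n s = 0)
    (n s : ℕ) (hs : M ≤ s) : Bf M lam X Y n s = 0 := by
  unfold Bf
  rw [hX0 1 s hs, zero_add]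
  refine Finset.sum_eq_zero fun r _ => ?_
  rw [Finset.sum_eq_zero fun k _ => by rw [hY0 k (s + r) (by omega), mul_zero], mul_zero]

lemma Gf_one (M : ℕ) (lam : ℂ) (X Y : ℕ → ℕ → ℂ) (hM : 1 ≤ M) (m : ℕ) :
    Gf M lam X Y 1 m = X 1 m := by
  unfold Gf
  rw [Finset.sum_eq_single 0]
  · have hB : Bf M lam X Y 1 (m + 0) = X 1 m := by
      unfold Bf
      simp
    rw [hB]
    norm_num
  · intro i _ hi
    rw [Nat.choose_eq_zero_of_lt (by omega : (1:ℕ) - 1 < i)]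
    simp
  · intro h
    exact absurd (mem_range.mpr hM) h

lemma Gf_step (M : ℕ) (lam : ℂ) (X Y : ℕ → ℕ → ℂ) (hM : 1 ≤ M) (hlam : lam ≠ 0)
    (hX0 : ∀ n s, M ≤ s → X n s = 0) (hY0 : ∀ n s, M ≤ s → Y n s = 0)
    (n : ℕ) (hn : 1 ≤ n) (m : ℕ) :
    Gf M lam X Y (n+1) m
      = lam * Gf M lam X Y n m + Gf M lam X Y n (m+1) + Y n m := by
  obtain ⟨n, rfl⟩ : ∃ k, n = k + 1 := ⟨n - 1, by omega⟩
  set D : ℕ → ℂ := fun s => ∑ r ∈ range M, (-1:ℂ)^r *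
      (((∏ j ∈ range r, (((n+1:ℕ):ℂ) + (j:ℂ))) / (r.factorial : ℂ)) *
        lam ^ (-((n+1:ℕ):ℤ) - (r:ℤ)) * Y (n+1) (s + r)) with hD
  have hBstep : ∀ s, Bf M lam X Y (n+2) s = Bf M lam X Y (n+1) s + D s := by
    intro s
    unfold Bf
    rw [hD, add_assoc]
    congr 1
    rw [← Finset.sum_add_distrib]
    refine Finset.sum_congr rfl fun r _ => ?_
    rw [show n+2-1 = n+1 from rfl, show n+1-1 = n from rfl,
        Finset.sum_Icc_succ_top (by omega : 1 ≤ n + 1)]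
    ring
  unfold Gf
  rw [show (n+2) - 1 = n + 1 from rfl, show (n+1) - 1 = n from rfl]
  have hsplit : ∀ i ∈ range M,
      ((n+1).choose i : ℂ) * lam ^ (((n+2:ℕ):ℤ) - 1 - (i:ℤ)) * Bf M lam X Y (n+2) (m+i)
      = lam * ((n.choose i : ℂ) * lam ^ (((n+1:ℕ):ℤ) - 1 - (i:ℤ)) * Bf M lam X Y (n+1) (m+i))
        + (if i = 0 then 0 else
            (n.choose (i-1) : ℂ) * lam ^ (((n+2:ℕ):ℤ) - 1 - (i:ℤ)) * Bf M lam X Y (n+1) (m+i))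
        + ((n+1).choose i : ℂ) * lam ^ (((n+2:ℕ):ℤ) - 1 - (i:ℤ)) * D (m+i) := by
    intro i _
    rw [hBstep (m+i), mul_add]
    have hE : (((n+2:ℕ):ℤ) - 1 - (i:ℤ)) = 1 + (((n+1:ℕ):ℤ) - 1 - (i:ℤ)) := by push_cast; ring
    congr 1
    cases i with
    | zero =>
      rw [if_pos rfl, add_zero, hE, zpow_add₀ hlam, zpow_one]
      simp only [Nat.choose_zero_right, Nat.cast_one]
      ring
    | succ i =>
      rw [if_neg (Nat.succ_ne_zero i), Nat.choose_succ_succ, Nat.succ_sub_one,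
          hE, zpow_add₀ hlam, zpow_one]
      push_cast
      ring
  rw [Finset.sum_congr rfl hsplit, Finset.sum_add_distrib, Finset.sum_add_distrib]
  congr 1
  · congr 1
    · exact (Finset.mul_sum _ _ _).symm
    · -- middle sum equals Gf at (m+1)
      obtain ⟨M', rfl⟩ : ∃ k, M = k + 1 := ⟨M - 1, by omega⟩
      rw [Finset.sum_range_succ'
          (fun i => if i = 0 then 0 else
            (n.choose (i-1) : ℂ) * lam ^ (((n+2:ℕ):ℤ) - 1 - (i:ℤ)) * Bf (M'+1) lam X Y (n+1) (m+i)) M',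
        Finset.sum_range_succ
          (fun i => (n.choose i : ℂ) * lam ^ (((n+1:ℕ):ℤ) - 1 - (i:ℤ)) * Bf (M'+1) lam X Y (n+1) (m+1+i)) M']
      rw [if_pos rfl, add_zero,
          Bf_of_ge (M'+1) lam X Y hX0 hY0 (n+1) (m+1+M') (by omega), mul_zero, add_zero]
      refine Finset.sum_congr rfl fun i _ => ?_
      rw [if_neg (Nat.succ_ne_zero i), Nat.succ_sub_one,
          show m + (i+1) = m + 1 + i by omega,
          show ((n+2:ℕ):ℤ) - 1 - ((i+1:ℕ):ℤ) = ((n+1:ℕ):ℤ) - 1 - (i:ℤ) by push_cast; ring]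
  · -- last sum equals Y (n+1) m
    have hc := conv_sum M hM
        (fun i => ((n+1).choose i : ℂ) * lam ^ (((n+1:ℕ):ℤ) - (i:ℤ)))
        (fun r => (-1:ℂ)^r * ((∏ j ∈ range r, (((n+1:ℕ):ℂ) + (j:ℂ))) / (r.factorial : ℂ)) *
          lam ^ (-((n+1:ℕ):ℤ) - (r:ℤ)))
        (fun t => Y (n+1) (m + t))
        (fun t ht => hY0 (n+1) (m+t) (by omega))
        (by
          intro s
          have h1 : ∀ r ∈ range (s+1),
              (((n+1).choose (s-r) : ℂ) * lam ^ (((n+1:ℕ):ℤ) - ((s-r:ℕ):ℤ))) *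
                ((-1:ℂ)^r * ((∏ j ∈ range r, (((n+1:ℕ):ℂ) + (j:ℂ))) / (r.factorial : ℂ)) *
                  lam ^ (-((n+1:ℕ):ℤ) - (r:ℤ)))
              = lam ^ (-(s:ℤ)) * (((n+1).choose (s-r) : ℂ) *
                  ((-1:ℂ)^r * ((∏ j ∈ range r, (((n+1:ℕ):ℂ) + (j:ℂ))) / (r.factorial : ℂ)))) := by
            intro r hr
            have hr' : r ≤ s := by
              have := mem_range.mp hr; omega
            have he : (((n+1:ℕ):ℤ) - ((s-r:ℕ):ℤ)) + (-((n+1:ℕ):ℤ) - (r:ℤ)) = -(s:ℤ) := by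
              rw [Nat.cast_sub hr']; push_cast; ring
            calc (((n+1).choose (s-r) : ℂ) * lam ^ (((n+1:ℕ):ℤ) - ((s-r:ℕ):ℤ))) *
                ((-1:ℂ)^r * ((∏ j ∈ range r, (((n+1:ℕ):ℂ) + (j:ℂ))) / (r.factorial : ℂ)) *
                  lam ^ (-((n+1:ℕ):ℤ) - (r:ℤ)))
                = (lam ^ (((n+1:ℕ):ℤ) - ((s-r:ℕ):ℤ)) * lam ^ (-((n+1:ℕ):ℤ) - (r:ℤ))) *
                  (((n+1).choose (s-r) : ℂ) *
                    ((-1:ℂ)^r * ((∏ j ∈ range r, (((n+1:ℕ):ℂ) + (j:ℂ))) / (r.factorial : ℂ)))) := by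
                  ring
              _ = _ := by rw [← zpow_add₀ hlam, he]
          rw [Finset.sum_congr rfl h1, ← Finset.mul_sum, conv_delta (n+1) s (by omega)]
          split
          · subst ‹s = 0›; simp
          · rw [mul_zero])
    simp only [add_zero] at hc
    rw [← hc]
    refine Finset.sum_congr rfl fun i _ => ?_
    rw [hD]
    rw [Finset.mul_sum]
    refine Finset.sum_congr rfl fun r _ => ?_
    rw [show ((n+2:ℕ):ℤ) - 1 - (i:ℤ) = ((n+1:ℕ):ℤ) - (i:ℤ) by push_cast; ring,
        show m + i + r = m + (i + r) by omega]
    ring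

theorem key (M : ℕ) (lam : ℂ) (X Y : ℕ → ℕ → ℂ) (hM : 1 ≤ M) (hlam : lam ≠ 0)
    (hX0 : ∀ n s, M ≤ s → X n s = 0) (hY0 : ∀ n s, M ≤ s → Y n s = 0)
    (hrec : ∀ n, 1 ≤ n → ∀ s, X (n+1) s = lam * X n s + X n (s+1) + Y n s) :
    ∀ n, 1 ≤ n → ∀ m, X n m = Gf M lam X Y n m := by
  intro n hn
  induction n, hn using Nat.le_induction with
  | base => intro m; exact (Gf_one M lam X Y hM m).symm
  | succ n hn ih =>
    intro m
    rw [hrec n hn m, ih m, ih (m+1), Gf_step M lam X Y hM hlam hX0 hY0 n hn m]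

/-- The `M×M` Jordan cell with eigenvalue `lam`: `lam` on the diagonal, `1` on the
superdiagonal, `0` elsewhere. -/
def jordanCell (M : ℕ) (lam : ℂ) : Matrix (Fin M) (Fin M) ℂ :=
  fun i j => if (j : ℕ) = (i : ℕ) then lam else if (j : ℕ) = (i : ℕ) + 1 then 1 else 0

lemma jordanCell_mulVec (M : ℕ) (lam : ℂ) (v : Fin M → ℂ) (i : Fin M) :
    (jordanCell M lam).mulVec v i
      = lam * v i + (if h : (i:ℕ) + 1 < M then v ⟨(i:ℕ) + 1, h⟩ else 0) := by
  have hsplit : ∀ j : Fin M, jordanCell M lam i j * v j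
      = (if j = i then lam * v j else 0) + (if (j:ℕ) = (i:ℕ) + 1 then v j else 0) := by
    intro j
    unfold jordanCell
    by_cases h1 : (j:ℕ) = (i:ℕ)
    · have hj : j = i := Fin.ext h1
      subst hj
      rw [if_pos rfl, if_pos rfl, if_neg (by omega), add_zero]
    · have h2 : j ≠ i := fun e => h1 (by rw [e])
      rw [if_neg h1, if_neg h2, zero_add]
      by_cases h3 : (j:ℕ) = (i:ℕ) + 1
      · rw [if_pos h3, if_pos h3, one_mul]
      · rw [if_neg h3, if_neg h3, zero_mul]
  have : (jordanCell M lam).mulVec v i = ∑ j : Fin M, jordanCell M lam i j * v j := rfl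
  rw [this, Finset.sum_congr rfl fun j _ => hsplit j, Finset.sum_add_distrib]
  congr 1
  · rw [Finset.sum_ite_eq' Finset.univ i (fun j => lam * v j), if_pos (Finset.mem_univ i)]
  · by_cases h : (i:ℕ) + 1 < M
    · rw [dif_pos h]
      have hiff : ∀ j : Fin M, ((j:ℕ) = (i:ℕ) + 1) ↔ (j = ⟨(i:ℕ)+1, h⟩) := by
        intro j
        constructor
        · intro e; exact Fin.ext e
        · intro e; rw [e]
      rw [Finset.sum_congr rfl fun j _ => by rw [if_congr (hiff j) rfl rfl],
          Finset.sum_ite_eq' Finset.univ (⟨(i:ℕ)+1, h⟩ : Fin M) v,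
          if_pos (Finset.mem_univ _)]
    · rw [dif_neg h]
      refine Finset.sum_eq_zero fun j _ => if_neg fun e => h ?_
      rw [← e]; exact j.isLt

/-- explicit formula for the coordinates of the solution of
`x(n+1) = J_λ x(n) + y(n)` (n ≥ 1), provided `λ ≠ 0`.  Here coordinates are indexed
by `Fin M` (so index `m : Fin M` corresponds to the `(m+1)`-th coordinate of the
paper), `(k)^{[r]} = ∏_{j=0}^{r-1}(k+j)` is the rising factorial, and `λ` powers with
possibly negative exponents are `zpow`s. -/
theorem stmt_18 (M : ℕ) (hM : 1 ≤ M) (lam : ℂ) (hlam : lam ≠ 0)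
    (x y : ℕ → Fin M → ℂ)
    (hrec : ∀ n, 1 ≤ n → x (n + 1) = (jordanCell M lam).mulVec (x n) + y n) :
    ∀ m : Fin M, ∀ n, 1 ≤ n →
      x n m =
        ∑ i ∈ (Finset.range (M - (m : ℕ))).attach,
          ((n - 1).choose i.1 : ℂ) * lam ^ ((n : ℤ) - 1 - (i.1 : ℤ)) *
            (x 1 ⟨(m : ℕ) + i.1, by
                have := Finset.mem_range.mp i.2; omega⟩ +
              ∑ r ∈ (Finset.range (M - ((m : ℕ) + i.1))).attach,
                (-1 : ℂ) ^ r.1 *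
                  ∑ k ∈ Finset.Icc 1 (n - 1),
                    ((∏ j ∈ Finset.range r.1, ((k : ℂ) + (j : ℂ))) / (r.1.factorial : ℂ)) *
                      lam ^ (-(k : ℤ) - (r.1 : ℤ)) *
                      y k ⟨(m : ℕ) + i.1 + r.1, by
                        have h1 := Finset.mem_range.mp i.2
                        have h2 := Finset.mem_range.mp r.2; omega⟩) := by
  intro m n hn
  obtain ⟨X, hX⟩ : ∃ X : ℕ → ℕ → ℂ,
      ∀ nn s, X nn s = if h : s < M then x nn ⟨s, h⟩ else 0 := ⟨_, fun _ _ => rfl⟩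
  obtain ⟨Y, hY⟩ : ∃ Y : ℕ → ℕ → ℂ,
      ∀ nn s, Y nn s = if h : s < M then y nn ⟨s, h⟩ else 0 := ⟨_, fun _ _ => rfl⟩
  have hX0 : ∀ n s, M ≤ s → X n s = 0 := by
    intro n s h; rw [hX]; exact dif_neg (by omega)
  have hY0 : ∀ n s, M ≤ s → Y n s = 0 := by
    intro n s h; rw [hY]; exact dif_neg (by omega)
  have hxX : ∀ (nn v : ℕ) (h : v < M), x nn ⟨v, h⟩ = X nn v := by
    intro nn v h; rw [hX, dif_pos h]
  have hyY : ∀ (nn v : ℕ) (h : v < M), y nn ⟨v, h⟩ = Y nn v := by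
    intro nn v h; rw [hY, dif_pos h]
  have hrec' : ∀ n, 1 ≤ n → ∀ s, X (n+1) s = lam * X n s + X n (s+1) + Y n s := by
    intro n hn s
    by_cases hs : s < M
    · have h0 := congrFun (hrec n hn) ⟨s, hs⟩
      rw [Pi.add_apply, jordanCell_mulVec] at h0
      have h : x (n+1) ⟨s, hs⟩ = lam * x n ⟨s, hs⟩
          + (if h2 : s + 1 < M then x n ⟨s+1, h2⟩ else 0) + y n ⟨s, hs⟩ := h0
      have hnext : (if h2 : s + 1 < M then x n ⟨s+1, h2⟩ else 0) = X n (s+1) := by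
        by_cases h2 : s + 1 < M
        · rw [dif_pos h2, hxX n (s+1) h2]
        · rw [dif_neg h2, hX0 n (s+1) (by omega)]
      rw [← hxX (n+1) s hs, h, hxX n s hs, hyY n s hs, hnext]
    · rw [hX0 (n+1) s (by omega), hX0 n s (by omega), hX0 n (s+1) (by omega),
        hY0 n s (by omega)]
      ring
  have hkey := key M lam X Y hM hlam hX0 hY0 hrec' n hn (m : ℕ)
  simp only [hyY]
  rw [show x n m = X n (m : ℕ) by rw [← hxX n (m:ℕ) m.isLt, Fin.eta], hkey]
  symm
  have hBf : ∀ i : ℕ,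
      X 1 ((m:ℕ) + i) + ∑ r ∈ Finset.range (M - ((m:ℕ) + i)),
        (-1 : ℂ) ^ r * ∑ k ∈ Finset.Icc 1 (n - 1),
          ((∏ j ∈ Finset.range r, ((k : ℂ) + (j : ℂ))) / (r.factorial : ℂ)) *
            lam ^ (-(k : ℤ) - (r : ℤ)) * Y k ((m:ℕ) + i + r)
      = Bf M lam X Y n ((m:ℕ) + i) := by
    intro i
    unfold Bf
    congr 1
    refine Finset.sum_subset (Finset.range_subset_range.mpr (by omega)) ?_
    intro r hr hr2
    simp only [Finset.mem_range] at hr hr2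
    rw [Finset.sum_eq_zero fun k _ => by rw [hY0 k ((m:ℕ) + i + r) (by omega), mul_zero],
      mul_zero]
  calc (∑ i ∈ (Finset.range (M - (m:ℕ))).attach,
        ((n - 1).choose i.1 : ℂ) * lam ^ ((n : ℤ) - 1 - (i.1 : ℤ)) *
          (x 1 ⟨(m:ℕ) + i.1, by have := Finset.mem_range.mp i.2; omega⟩ +
            ∑ r ∈ (Finset.range (M - ((m:ℕ) + i.1))).attach,
              (-1 : ℂ) ^ r.1 *
                ∑ k ∈ Finset.Icc 1 (n - 1),
                  ((∏ j ∈ Finset.range r.1, ((k : ℂ) + (j : ℂ))) / (r.1.factorial : ℂ)) *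
                    lam ^ (-(k : ℤ) - (r.1 : ℤ)) * Y k ((m:ℕ) + i.1 + r.1)))
      = ∑ i ∈ (Finset.range (M - (m:ℕ))).attach,
        ((n - 1).choose i.1 : ℂ) * lam ^ ((n : ℤ) - 1 - (i.1 : ℤ)) *
          (X 1 ((m:ℕ) + i.1) +
            ∑ r ∈ Finset.range (M - ((m:ℕ) + i.1)),
              (-1 : ℂ) ^ r *
                ∑ k ∈ Finset.Icc 1 (n - 1),
                  ((∏ j ∈ Finset.range r, ((k : ℂ) + (j : ℂ))) / (r.factorial : ℂ)) *
                    lam ^ (-(k : ℤ) - (r : ℤ)) * Y k ((m:ℕ) + i.1 + r)) := by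
        refine Finset.sum_congr rfl fun i _ => ?_
        rw [hxX]
        congr 1
        congr 1
        exact Finset.sum_attach (Finset.range (M - ((m:ℕ) + i.1)))
          (fun r => (-1 : ℂ) ^ r *
            ∑ k ∈ Finset.Icc 1 (n - 1),
              ((∏ j ∈ Finset.range r, ((k : ℂ) + (j : ℂ))) / (r.factorial : ℂ)) *
                lam ^ (-(k : ℤ) - (r : ℤ)) * Y k ((m:ℕ) + i.1 + r))
    _ = ∑ i ∈ Finset.range (M - (m:ℕ)),
        ((n - 1).choose i : ℂ) * lam ^ ((n : ℤ) - 1 - (i : ℤ)) *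
          (X 1 ((m:ℕ) + i) +
            ∑ r ∈ Finset.range (M - ((m:ℕ) + i)),
              (-1 : ℂ) ^ r *
                ∑ k ∈ Finset.Icc 1 (n - 1),
                  ((∏ j ∈ Finset.range r, ((k : ℂ) + (j : ℂ))) / (r.factorial : ℂ)) *
                    lam ^ (-(k : ℤ) - (r : ℤ)) * Y k ((m:ℕ) + i + r)) :=
        Finset.sum_attach (Finset.range (M - (m:ℕ)))
          (fun i => ((n - 1).choose i : ℂ) * lam ^ ((n : ℤ) - 1 - (i : ℤ)) *
            (X 1 ((m:ℕ) + i) +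
              ∑ r ∈ Finset.range (M - ((m:ℕ) + i)),
                (-1 : ℂ) ^ r *
                  ∑ k ∈ Finset.Icc 1 (n - 1),
                    ((∏ j ∈ Finset.range r, ((k : ℂ) + (j : ℂ))) / (r.factorial : ℂ)) *
                      lam ^ (-(k : ℤ) - (r : ℤ)) * Y k ((m:ℕ) + i + r)))
    _ = ∑ i ∈ Finset.range (M - (m:ℕ)),
        ((n - 1).choose i : ℂ) * lam ^ ((n : ℤ) - 1 - (i : ℤ)) * Bf M lam X Y n ((m:ℕ) + i) := by
        refine Finset.sum_congr rfl fun i _ => ?_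
        rw [hBf i]
    _ = Gf M lam X Y n (m:ℕ) := by
        unfold Gf
        refine Finset.sum_subset (Finset.range_subset_range.mpr (by omega)) ?_
        intro i hi hi2
        simp only [Finset.mem_range] at hi hi2
        rw [Bf_of_ge M lam X Y hX0 hY0 n ((m:ℕ) + i) (by omega), mul_zero]
end
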